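/- Let ρ>0, φ∈(0,1), R>0, a>0 with R a^{ρφ}/(ρ^φ Γ(φ+1)) < 1. Suppose f : [0,a]×ℝ → ℝ is continuous and R-Lipschitz in its second argument, and c ∈ ℝ. Then there is a unique continuous u : [0,a] → ℝ with u(x) = c + (ρ^{1-φ}/Γ(φ)) ∫_0^x s^{ρ-1}(x^ρ−s^ρ)^{φ-1} f(s,u(s)) ds for all x ∈ [0,a]. -/

import Mathlib

open Real MeasureTheory Set intervalIntegral

-- Bernoulli-type: min ρ 1 * (1 - τ) ≤ 1 - τ ^ ρ on [0,1]
lemma kern_bern {ρ : ℝ} (hρ : 0 < ρ) {τ : ℝ} (h0 : 0 ≤ τ) (h1 : τ ≤ 1) :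
    min ρ 1 * (1 - τ) ≤ 1 - τ ^ ρ := by
  rcases le_total ρ 1 with hle | hge
  · rw [min_eq_left hle]
    have hb : (1 + (τ - 1)) ^ ρ ≤ 1 + ρ * (τ - 1) :=
      rpow_one_add_le_one_add_mul_self (by linarith) hρ.le hle
    have : (1 + (τ - 1)) = τ := by ring
    rw [this] at hb
    nlinarith
  · rw [min_eq_right hge]
    rcases eq_or_lt_of_le h0 with h0' | h0'
    · rw [← h0', Real.zero_rpow hρ.ne']; norm_num
    · have : τ ^ ρ ≤ τ ^ (1:ℝ) := Real.rpow_le_rpow_of_exponent_ge h0' h1 hge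
      rw [Real.rpow_one] at this; nlinarith

lemma kern_nonneg {ρ φ : ℝ} (hρ : 0 < ρ) {τ : ℝ} (h0 : 0 ≤ τ) (h1 : τ ≤ 1) :
    0 ≤ τ ^ (ρ - 1) * (1 - τ ^ ρ) ^ (φ - 1) := by
  apply mul_nonneg (Real.rpow_nonneg h0 _) (Real.rpow_nonneg ?_ _)
  have := Real.rpow_le_one h0 h1 hρ.le
  linarith

lemma kern_meas {ρ φ : ℝ} : Measurable (fun τ : ℝ => τ ^ (ρ - 1) * (1 - τ ^ ρ) ^ (φ - 1)) := by
  fun_prop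

-- pointwise bound on Ioc 0 1
lemma kern_bound {ρ φ : ℝ} (hρ : 0 < ρ) (hφ : φ ∈ Set.Ioo (0:ℝ) 1) {τ : ℝ}
    (h0 : 0 < τ) (h1 : τ ≤ 1) :
    τ ^ (ρ - 1) * (1 - τ ^ ρ) ^ (φ - 1) ≤
      (min ρ 1) ^ (φ - 1) * ((2:ℝ) ^ (1 - φ) + 2 ^ (1 - ρ) + 1) *
        (τ ^ (ρ - 1) + (1 - τ) ^ (φ - 1)) := by
  obtain ⟨hφ0, hφ1⟩ := hφ
  have hm : 0 < min ρ 1 := lt_min hρ one_pos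
  have hτρ : τ ^ (ρ - 1) ≥ 0 := Real.rpow_nonneg h0.le _
  have h2φ : (0:ℝ) ≤ 2 ^ (1 - φ) := Real.rpow_nonneg (by norm_num) _
  have h2ρ : (0:ℝ) ≤ 2 ^ (1 - ρ) := Real.rpow_nonneg (by norm_num) _
  have half : ((2:ℝ)⁻¹) ^ (φ - 1) = 2 ^ (1 - φ) := by
    rw [Real.inv_rpow (by norm_num : (0:ℝ) ≤ 2), ← Real.rpow_neg (by norm_num : (0:ℝ) ≤ 2)]
    congr 1; ring
  -- step 1
  have step1 : (1 - τ ^ ρ) ^ (φ - 1) ≤ (min ρ 1) ^ (φ - 1) * (1 - τ) ^ (φ - 1) := by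
    rcases eq_or_lt_of_le h1 with rfl | hlt
    · simp [Real.one_rpow, Real.zero_rpow (by linarith : φ - 1 ≠ 0),
        mul_nonneg (Real.rpow_nonneg hm.le _) (le_refl (0:ℝ))]
    · have hb := kern_bern hρ h0.le h1
      have hpos : 0 < min ρ 1 * (1 - τ) := mul_pos hm (by linarith)
      calc (1 - τ ^ ρ) ^ (φ - 1) ≤ (min ρ 1 * (1 - τ)) ^ (φ - 1) :=
            Real.rpow_le_rpow_of_nonpos hpos hb (by linarith)
        _ = (min ρ 1) ^ (φ - 1) * (1 - τ) ^ (φ - 1) :=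
            Real.mul_rpow hm.le (by linarith)
  have h1τ : (0:ℝ) ≤ (1 - τ) ^ (φ - 1) := Real.rpow_nonneg (by linarith) _
  -- step 2
  have step2 : τ ^ (ρ - 1) * (1 - τ) ^ (φ - 1) ≤
      ((2:ℝ) ^ (1 - φ) + 2 ^ (1 - ρ) + 1) * (τ ^ (ρ - 1) + (1 - τ) ^ (φ - 1)) := by
    rcases le_total τ (1/2) with hhalf | hhalf
    · have : (1 - τ) ^ (φ - 1) ≤ ((2:ℝ)⁻¹) ^ (φ - 1) :=
        Real.rpow_le_rpow_of_nonpos (by norm_num) (by linarith) (by linarith)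
      rw [half] at this
      nlinarith
    · have hτb : τ ^ (ρ - 1) ≤ 2 ^ (1 - ρ) + 1 := by
        rcases le_total ρ 1 with hρ1 | hρ1
        · have : τ ^ (ρ - 1) ≤ ((2:ℝ)⁻¹) ^ (ρ - 1) :=
            Real.rpow_le_rpow_of_nonpos (by norm_num) (by linarith) (by linarith)
          have half' : ((2:ℝ)⁻¹) ^ (ρ - 1) = 2 ^ (1 - ρ) := by
            rw [Real.inv_rpow (by norm_num : (0:ℝ) ≤ 2), ← Real.rpow_neg (by norm_num : (0:ℝ) ≤ 2)]
            congr 1; ring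
          rw [half'] at this; linarith
        · have : τ ^ (ρ - 1) ≤ 1 := Real.rpow_le_one h0.le h1 (by linarith)
          linarith
      nlinarith
  calc τ ^ (ρ - 1) * (1 - τ ^ ρ) ^ (φ - 1)
      ≤ τ ^ (ρ - 1) * ((min ρ 1) ^ (φ - 1) * (1 - τ) ^ (φ - 1)) := by
        exact mul_le_mul_of_nonneg_left step1 hτρ
    _ = (min ρ 1) ^ (φ - 1) * (τ ^ (ρ - 1) * (1 - τ) ^ (φ - 1)) := by ring
    _ ≤ (min ρ 1) ^ (φ - 1) * (((2:ℝ) ^ (1 - φ) + 2 ^ (1 - ρ) + 1) *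
          (τ ^ (ρ - 1) + (1 - τ) ^ (φ - 1))) :=
        mul_le_mul_of_nonneg_left step2 (Real.rpow_nonneg hm.le _)
    _ = _ := by ring

lemma kern_intble {ρ φ : ℝ} (hρ : 0 < ρ) (hφ : φ ∈ Set.Ioo (0:ℝ) 1) :
    IntervalIntegrable (fun τ : ℝ => τ ^ (ρ - 1) * (1 - τ ^ ρ) ^ (φ - 1)) volume 0 1 := by
  obtain ⟨hφ0, hφ1⟩ := hφ
  have h1 : IntervalIntegrable (fun τ : ℝ => τ ^ (ρ - 1)) volume 0 1 :=
    intervalIntegral.intervalIntegrable_rpow' (by linarith)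
  have h2 : IntervalIntegrable (fun τ : ℝ => (1 - τ) ^ (φ - 1)) volume 0 1 := by
    have := (intervalIntegral.intervalIntegrable_rpow' (by linarith : (-1:ℝ) < φ - 1)
      (a := 0) (b := 1)).comp_sub_left 1
    simpa using this.symm
  have hbd := ((h1.add h2).const_mul
    ((min ρ 1) ^ (φ - 1) * ((2:ℝ) ^ (1 - φ) + 2 ^ (1 - ρ) + 1)))
  refine hbd.mono_fun' (kern_meas.aestronglyMeasurable.restrict) ?_
  rw [Set.uIoc_of_le (by norm_num : (0:ℝ) ≤ 1)]
  filter_upwards [ae_restrict_mem measurableSet_Ioc] with τ hτ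
  have h0 := hτ.1
  have h1' := hτ.2
  have hnn : 0 ≤ τ ^ (ρ - 1) * (1 - τ ^ ρ) ^ (φ - 1) := by
    apply mul_nonneg (Real.rpow_nonneg h0.le _) (Real.rpow_nonneg ?_ _)
    nlinarith [Real.rpow_le_one h0.le h1' hρ.le, h0.le]
  simp only [Real.norm_eq_abs, abs_of_nonneg hnn]
  exact le_of_le_of_eq (kern_bound hρ ⟨hφ0, hφ1⟩ h0 h1') (by ring)

lemma cont_rpow_const {p : ℝ} (hp : 0 < p) : Continuous (fun x : ℝ => x ^ p) :=
  continuous_iff_continuousAt.mpr fun x => Real.continuousAt_rpow_const x p (Or.inr hp.le)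

lemma kern_integral {ρ φ : ℝ} (hρ : 0 < ρ) (hφ : φ ∈ Set.Ioo (0:ℝ) 1) :
    ∫ τ in (0:ℝ)..1, τ ^ (ρ - 1) * (1 - τ ^ ρ) ^ (φ - 1) = 1 / (ρ * φ) := by
  obtain ⟨hφ0, hφ1⟩ := hφ
  have hcont : ContinuousOn (fun τ : ℝ => -((1 - τ ^ ρ) ^ φ) / (ρ * φ))
      (Set.Icc 0 1) := by
    apply Continuous.continuousOn
    exact (((cont_rpow_const hφ0).comp
      (continuous_const.sub (cont_rpow_const hρ))).neg).div_const _
  have hderiv : ∀ τ ∈ Set.Ioo (0:ℝ) 1, HasDerivAt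
      (fun τ : ℝ => -((1 - τ ^ ρ) ^ φ) / (ρ * φ))
      (τ ^ (ρ - 1) * (1 - τ ^ ρ) ^ (φ - 1)) τ := by
    intro τ hτ
    have h0 : 0 < τ := hτ.1
    have h1 : τ < 1 := hτ.2
    have hpos : 0 < 1 - τ ^ ρ := by
      have : τ ^ ρ < 1 ^ ρ := Real.rpow_lt_rpow h0.le h1 hρ
      rw [Real.one_rpow] at this; linarith
    have h1' : HasDerivAt (fun τ : ℝ => τ ^ ρ) (ρ * τ ^ (ρ - 1)) τ :=
      Real.hasDerivAt_rpow_const (Or.inl h0.ne')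
    have h2 : HasDerivAt (fun τ : ℝ => 1 - τ ^ ρ) (-(ρ * τ ^ (ρ - 1))) τ :=
      h1'.const_sub 1
    have h3 : HasDerivAt (fun τ : ℝ => -((1 - τ ^ ρ) ^ φ) / (ρ * φ))
        (-(-(ρ * τ ^ (ρ - 1)) * φ * (1 - τ ^ ρ) ^ (φ - 1)) / (ρ * φ)) τ := ((h2.rpow_const (p := φ) (Or.inl hpos.ne')).neg).div_const (ρ * φ)
    convert h3 using 1
    have hρne : ρ ≠ 0 := hρ.ne'
    have hφne : φ ≠ 0 := hφ0.ne'
    field_simp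
  have hint := kern_intble hρ ⟨hφ0, hφ1⟩
  rw [intervalIntegral.integral_eq_sub_of_hasDerivAt_of_le (by norm_num) hcont hderiv hint]
  simp only [Real.one_rpow, Real.zero_rpow hρ.ne']
  norm_num
  field_simp
  ring_nf
  simp [Real.zero_rpow hφ0.ne']

lemma subst_lemma {ρ φ : ℝ} (hρ : 0 < ρ) (hφ : φ ∈ Set.Ioo (0:ℝ) 1) (g : ℝ → ℝ)
    {x : ℝ} (hx : 0 ≤ x) :
    ∫ s in (0:ℝ)..x, s ^ (ρ - 1) * (x ^ ρ - s ^ ρ) ^ (φ - 1) * g s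
      = x ^ (ρ * φ) * ∫ τ in (0:ℝ)..1, τ ^ (ρ - 1) * (1 - τ ^ ρ) ^ (φ - 1) * g (x * τ) := by
  obtain ⟨hφ0, hφ1⟩ := hφ
  rcases hx.eq_or_lt with rfl | hx'
  · simp [Real.zero_rpow (by positivity : ρ * φ ≠ 0)]
  · have key := intervalIntegral.integral_comp_mul_left
      (fun s => s ^ (ρ - 1) * (x ^ ρ - s ^ ρ) ^ (φ - 1) * g s) (a := 0) (b := 1) hx'.ne'
    simp only [mul_zero, mul_one, smul_eq_mul] at key
    have congrInt : ∫ τ in (0:ℝ)..1,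
        (x * τ) ^ (ρ - 1) * (x ^ ρ - (x * τ) ^ ρ) ^ (φ - 1) * g (x * τ)
        = ∫ τ in (0:ℝ)..1, (x ^ (ρ - 1) * x ^ (ρ * (φ - 1))) *
            (τ ^ (ρ - 1) * (1 - τ ^ ρ) ^ (φ - 1) * g (x * τ)) := by
      apply intervalIntegral.integral_congr
      intro τ hτ
      rw [Set.uIcc_of_le (by norm_num : (0:ℝ) ≤ 1)] at hτ
      have hτ0 : 0 ≤ τ := hτ.1
      have hτ1 : τ ≤ 1 := hτ.2
      have h1 : (x * τ) ^ (ρ - 1) = x ^ (ρ - 1) * τ ^ (ρ - 1) := Real.mul_rpow hx hτ0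
      have h2 : (x * τ) ^ ρ = x ^ ρ * τ ^ ρ := Real.mul_rpow hx hτ0
      have hτρ : τ ^ ρ ≤ 1 := Real.rpow_le_one hτ0 hτ1 hρ.le
      have h3 : x ^ ρ - (x * τ) ^ ρ = x ^ ρ * (1 - τ ^ ρ) := by rw [h2]; ring
      have h4 : (x ^ ρ * (1 - τ ^ ρ)) ^ (φ - 1)
          = x ^ (ρ * (φ - 1)) * (1 - τ ^ ρ) ^ (φ - 1) := by
        rw [Real.mul_rpow (Real.rpow_nonneg hx _) (by linarith), ← Real.rpow_mul hx]
      simp only [h1, h3, h4]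
      ring
    have lhs : ∫ s in (0:ℝ)..x, s ^ (ρ - 1) * (x ^ ρ - s ^ ρ) ^ (φ - 1) * g s
        = x * ∫ τ in (0:ℝ)..1,
            (x * τ) ^ (ρ - 1) * (x ^ ρ - (x * τ) ^ ρ) ^ (φ - 1) * g (x * τ) := by
      rw [key]; field_simp
    rw [lhs, congrInt, intervalIntegral.integral_const_mul]
    have hxpow : x * (x ^ (ρ - 1) * x ^ (ρ * (φ - 1))) = x ^ (ρ * φ) := by
      calc x * (x ^ (ρ - 1) * x ^ (ρ * (φ - 1)))
          = x ^ (1:ℝ) * x ^ (ρ - 1 + ρ * (φ - 1)) := by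
            rw [Real.rpow_one, ← Real.rpow_add hx']
        _ = x ^ (1 + (ρ - 1 + ρ * (φ - 1))) := (Real.rpow_add hx' _ _).symm
        _ = x ^ (ρ * φ) := by ring_nf
    calc x * ((x ^ (ρ - 1) * x ^ (ρ * (φ - 1))) *
          ∫ τ in (0:ℝ)..1, τ ^ (ρ - 1) * (1 - τ ^ ρ) ^ (φ - 1) * g (x * τ))
        = (x * (x ^ (ρ - 1) * x ^ (ρ * (φ - 1)))) *
          ∫ τ in (0:ℝ)..1, τ ^ (ρ - 1) * (1 - τ ^ ρ) ^ (φ - 1) * g (x * τ) := by ring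
      _ = _ := by rw [hxpow]

theorem one_dim_fixed_point (ρ φ R a : ℝ)
    (hρ : 0 < ρ) (hφ : φ ∈ Set.Ioo (0:ℝ) 1) (hR : 0 < R) (ha : 0 < a)
    (hΞ : R * a ^ (ρ * φ) / (ρ ^ φ * Real.Gamma (φ + 1)) < 1)
    (f : ℝ → ℝ → ℝ)
    (hf : Continuous (fun p : ℝ × ℝ => f p.1 p.2))
    (hLip : ∀ x u v : ℝ, |f x u - f x v| ≤ R * |u - v|)
    (c : ℝ) :
    ∃ u : ℝ → ℝ,
      (ContinuousOn u (Set.Icc 0 a) ∧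
        ∀ x ∈ Set.Icc (0:ℝ) a,
          u x = c + ρ ^ (1 - φ) / Real.Gamma φ *
            ∫ s in (0:ℝ)..x, s ^ (ρ - 1) * (x ^ ρ - s ^ ρ) ^ (φ - 1) * f s (u s)) ∧
      ∀ u' : ℝ → ℝ,
        (ContinuousOn u' (Set.Icc 0 a) ∧
          ∀ x ∈ Set.Icc (0:ℝ) a,
            u' x = c + ρ ^ (1 - φ) / Real.Gamma φ *
              ∫ s in (0:ℝ)..x, s ^ (ρ - 1) * (x ^ ρ - s ^ ρ) ^ (φ - 1) * f s (u' s)) →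
        ∀ x ∈ Set.Icc (0:ℝ) a, u' x = u x := by
  obtain ⟨hφ0, hφ1⟩ := hφ
  have haa : (0:ℝ) ≤ a := ha.le
  have hΓφ : 0 < Real.Gamma φ := Real.Gamma_pos_of_pos hφ0
  have hΓφ1 : Real.Gamma (φ + 1) = φ * Real.Gamma φ := Real.Gamma_add_one hφ0.ne'
  have hΓφ1pos : 0 < Real.Gamma (φ + 1) := by rw [hΓφ1]; positivity
  set C0 : ℝ := ρ ^ (1 - φ) / Real.Gamma φ with hC0
  have hC0pos : 0 < C0 := div_pos (Real.rpow_pos_of_pos hρ _) hΓφ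
  -- G v : the composite continuous map on the compact interval
  let G : C(Set.Icc (0:ℝ) a, ℝ) → C(Set.Icc (0:ℝ) a, ℝ) := fun v =>
    ⟨fun t => f t (v t), hf.comp (continuous_subtype_val.prodMk v.continuous)⟩
  let g : C(Set.Icc (0:ℝ) a, ℝ) → ℝ → ℝ := fun v s => G v (Set.projIcc 0 a haa s)
  have hgcont : ∀ v, Continuous (g v) := fun v =>
    (G v).continuous.comp continuous_projIcc
  have hgbd : ∀ v s, |g v s| ≤ ‖G v‖ := fun v s => by
    simpa [Real.norm_eq_abs] using (G v).norm_coe_le_norm (Set.projIcc 0 a haa s)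
  have hgeq : ∀ v, ∀ s, ∀ hs : s ∈ Set.Icc (0:ℝ) a, g v s = f s (v ⟨s, hs⟩) := by
    intro v s hs
    simp only [g, Set.projIcc_of_mem haa hs]
    rfl
  have hglip : ∀ u v : C(Set.Icc (0:ℝ) a, ℝ), ∀ s, |g u s - g v s| ≤ R * dist u v := by
    intro u v s
    have h1 : |g u s - g v s| ≤ R * |u (Set.projIcc 0 a haa s) - v (Set.projIcc 0 a haa s)| :=
      hLip _ _ _
    have h2 : |u (Set.projIcc 0 a haa s) - v (Set.projIcc 0 a haa s)| ≤ dist u v := by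
      rw [← Real.dist_eq]; exact ContinuousMap.dist_apply_le_dist _
    exact h1.trans (mul_le_mul_of_nonneg_left h2 hR.le)
  -- the kernel
  set k : ℝ → ℝ := fun τ => τ ^ (ρ - 1) * (1 - τ ^ ρ) ^ (φ - 1) with hk
  have hknn : ∀ τ ∈ Set.uIoc (0:ℝ) 1, 0 ≤ k τ := by
    intro τ hτ
    rw [Set.uIoc_of_le (by norm_num : (0:ℝ) ≤ 1)] at hτ
    exact kern_nonneg hρ hτ.1.le hτ.2
  have hkint : IntervalIntegrable k volume 0 1 := kern_intble hρ ⟨hφ0, hφ1⟩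
  have hkgint : ∀ (v) (x : ℝ), IntervalIntegrable (fun τ => k τ * g v (x * τ)) volume 0 1 := by
    intro v x
    refine (hkint.const_mul ‖G v‖).mono_fun' ?_ ?_
    · exact ((kern_meas.mul
        (((hgcont v).comp (continuous_const.mul continuous_id)).measurable)).aestronglyMeasurable).restrict
    · filter_upwards [ae_restrict_mem measurableSet_uIoc] with τ hτ
      have := hknn τ hτ
      calc ‖k τ * g v (x * τ)‖ = k τ * |g v (x * τ)| := by
            rw [Real.norm_eq_abs, abs_mul, abs_of_nonneg this]
        _ ≤ k τ * ‖G v‖ := mul_le_mul_of_nonneg_left (hgbd v _) this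
        _ = ‖G v‖ * k τ := mul_comm _ _
  -- the parametrized integral
  set B : C(Set.Icc (0:ℝ) a, ℝ) → ℝ → ℝ := fun v x => ∫ τ in (0:ℝ)..1, k τ * g v (x * τ)
    with hB
  have hBcont : ∀ v, Continuous (B v) := by
    intro v
    apply intervalIntegral.continuous_of_dominated_interval
      (bound := fun τ => ‖G v‖ * k τ)
    · intro x
      exact ((kern_meas.mul
        (((hgcont v).comp (continuous_const.mul continuous_id)).measurable)).aestronglyMeasurable).restrict
    · intro x
      filter_upwards with τ hτ
      have := hknn τ hτ
      calc ‖k τ * g v (x * τ)‖ = k τ * |g v (x * τ)| := by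
            rw [Real.norm_eq_abs, abs_mul, abs_of_nonneg this]
        _ ≤ k τ * ‖G v‖ := mul_le_mul_of_nonneg_left (hgbd v _) this
        _ = ‖G v‖ * k τ := mul_comm _ _
    · exact hkint.const_mul _
    · filter_upwards with τ hτ
      exact continuous_const.mul ((hgcont v).comp (continuous_id.mul continuous_const))
  set Psi : C(Set.Icc (0:ℝ) a, ℝ) → ℝ → ℝ := fun v x => c + C0 * (x ^ (ρ * φ) * B v x)
    with hPsi
  have hPsicont : ∀ v, Continuous (Psi v) := fun v =>
    continuous_const.add (continuous_const.mul
      ((cont_rpow_const (mul_pos hρ hφ0)).mul (hBcont v)))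
  have hPsiPhi : ∀ v, ∀ x : ℝ, 0 ≤ x → Psi v x
      = c + C0 * ∫ s in (0:ℝ)..x, s ^ (ρ - 1) * (x ^ ρ - s ^ ρ) ^ (φ - 1) * g v s := by
    intro v x hx
    rw [subst_lemma hρ ⟨hφ0, hφ1⟩ (g v) hx]
  -- the operator
  set T : C(Set.Icc (0:ℝ) a, ℝ) → C(Set.Icc (0:ℝ) a, ℝ) := fun v =>
    ⟨fun t => Psi v t, (hPsicont v).comp continuous_subtype_val⟩ with hT
  set K : ℝ := R * a ^ (ρ * φ) / (ρ ^ φ * Real.Gamma (φ + 1)) with hKdef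
  have hρφpos : 0 < Real.rpow ρ φ := Real.rpow_pos_of_pos hρ φ
  have hKnn : 0 ≤ K := by
    apply div_nonneg (mul_nonneg hR.le (Real.rpow_nonneg haa _))
    exact (mul_pos hρφpos hΓφ1pos).le
  have hCid : C0 * (1 / (ρ * φ)) = 1 / (ρ ^ φ * Real.Gamma (φ + 1)) := by
    rw [hΓφ1, hC0]
    have h1 : ρ ^ (1 - φ) * ρ ^ φ = ρ := by
      rw [← Real.rpow_add hρ]; norm_num
    have hρφ : (0:ℝ) < ρ ^ φ := Real.rpow_pos_of_pos hρ φ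
    field_simp
    linear_combination h1
  have hdistT : ∀ u v : C(Set.Icc (0:ℝ) a, ℝ), dist (T u) (T v) ≤ K * dist u v := by
    intro u v
    rw [ContinuousMap.dist_le (mul_nonneg hKnn dist_nonneg)]
    intro t
    have ht0 : 0 ≤ (t:ℝ) := t.2.1
    have hta : (t:ℝ) ≤ a := t.2.2
    have hTu : (T u) t = Psi u t := rfl
    have hTv : (T v) t = Psi v t := rfl
    rw [hTu, hTv, Real.dist_eq]
    have hBdiff : |B u t - B v t| ≤ R * dist u v * (1 / (ρ * φ)) := by
      have hsub : B u ↑t - B v ↑t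
          = ∫ τ in (0:ℝ)..1, (k τ * g u (↑t * τ) - k τ * g v (↑t * τ)) :=
        (intervalIntegral.integral_sub (hkgint u _) (hkgint v _)).symm
      rw [hsub]
      have hle : ∀ᵐ τ ∂(volume.restrict (Set.uIoc (0:ℝ) 1)),
          ‖k τ * g u (↑t * τ) - k τ * g v (↑t * τ)‖ ≤ (R * dist u v) * k τ := by
        filter_upwards [ae_restrict_mem measurableSet_uIoc] with τ hτ
        have hknn' := hknn τ hτ
        calc ‖k τ * g u (↑t * τ) - k τ * g v (↑t * τ)‖
            = k τ * |g u (↑t * τ) - g v (↑t * τ)| := by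
              rw [Real.norm_eq_abs, ← mul_sub, abs_mul, abs_of_nonneg hknn']
          _ ≤ k τ * (R * dist u v) := mul_le_mul_of_nonneg_left (hglip u v _) hknn'
          _ = (R * dist u v) * k τ := mul_comm _ _
      have hnorm := intervalIntegral.norm_integral_le_of_norm_le (by norm_num)
        (by rw [← Set.uIoc_of_le (by norm_num : (0:ℝ) ≤ 1)]; exact (ae_restrict_iff' measurableSet_uIoc).mp hle) (hkint.const_mul (R * dist u v))
      have hval : ∫ τ in (0:ℝ)..1, (R * dist u v) * k τ = R * dist u v * (1 / (ρ * φ)) := by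
        rw [intervalIntegral.integral_const_mul, hk, kern_integral hρ ⟨hφ0, hφ1⟩]
      rw [hval] at hnorm
      have habs : |R * dist u v * (1 / (ρ * φ))| = R * dist u v * (1 / (ρ * φ)) := by
        apply abs_of_nonneg
        positivity
      rw [Real.norm_eq_abs] at hnorm
      exact hnorm
    have hxa : (t:ℝ) ^ (ρ * φ) ≤ a ^ (ρ * φ) :=
      Real.rpow_le_rpow ht0 hta (mul_pos hρ hφ0).le
    have hxnn : 0 ≤ (t:ℝ) ^ (ρ * φ) := Real.rpow_nonneg ht0 _
    calc |Psi u ↑t - Psi v ↑t| = C0 * ((t:ℝ) ^ (ρ * φ) * |B u ↑t - B v ↑t|) := by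
          rw [hPsi]
          have : (c + C0 * ((t:ℝ) ^ (ρ * φ) * B u ↑t)) - (c + C0 * ((t:ℝ) ^ (ρ * φ) * B v ↑t))
              = C0 * ((t:ℝ) ^ (ρ * φ) * (B u ↑t - B v ↑t)) := by ring
          rw [this, abs_mul, abs_mul, abs_of_nonneg hC0pos.le, abs_of_nonneg hxnn]
      _ ≤ C0 * (a ^ (ρ * φ) * (R * dist u v * (1 / (ρ * φ)))) := by
          apply mul_le_mul_of_nonneg_left ?_ hC0pos.le
          exact mul_le_mul hxa hBdiff (abs_nonneg _) (Real.rpow_nonneg haa _)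
      _ = (C0 * (1 / (ρ * φ))) * (a ^ (ρ * φ) * R) * dist u v := by ring
      _ = K * dist u v := by
          rw [hCid, hKdef]
          ring
  have hK1 : K < 1 := hΞ
  let K' : NNReal := ⟨K, hKnn⟩
  have hCW : ContractingWith K' T :=
    ⟨by exact_mod_cast hK1, LipschitzWith.of_dist_le_mul hdistT⟩
  let u₀ := ContractingWith.fixedPoint T hCW
  have hu₀ : T u₀ = u₀ := hCW.fixedPoint_isFixedPt
  -- translating the fixed point equation
  have hcongr : ∀ (v : C(Set.Icc (0:ℝ) a, ℝ)) (w : ℝ → ℝ), (∀ s, ∀ hs : s ∈ Set.Icc (0:ℝ) a, w s = v ⟨s, hs⟩) →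
      ∀ x ∈ Set.Icc (0:ℝ) a,
      (∫ s in (0:ℝ)..x, s ^ (ρ - 1) * (x ^ ρ - s ^ ρ) ^ (φ - 1) * g v s)
        = ∫ s in (0:ℝ)..x, s ^ (ρ - 1) * (x ^ ρ - s ^ ρ) ^ (φ - 1) * f s (w s) := by
    intro v w hw x hx
    apply intervalIntegral.integral_congr
    intro s hs
    rw [Set.uIcc_of_le hx.1] at hs
    have hsa : s ∈ Set.Icc (0:ℝ) a := ⟨hs.1, hs.2.trans hx.2⟩
    show s ^ (ρ - 1) * (x ^ ρ - s ^ ρ) ^ (φ - 1) * g v s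
      = s ^ (ρ - 1) * (x ^ ρ - s ^ ρ) ^ (φ - 1) * f s (w s)
    rw [hgeq v s hsa, hw s hsa]
  refine ⟨Set.IccExtend haa u₀, ⟨?_, ?_⟩, ?_⟩
  · exact (u₀.continuous.Icc_extend').continuousOn
  · intro x hx
    have h1 : Set.IccExtend haa (⇑u₀) x = u₀ ⟨x, hx⟩ := by
      rw [Set.IccExtend_of_mem haa _ hx]
    have h2 : u₀ ⟨x, hx⟩ = (T u₀) ⟨x, hx⟩ := by rw [hu₀]
    have h3 : (T u₀) ⟨x, hx⟩ = Psi u₀ x := rfl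
    rw [h1, h2, h3, hPsiPhi u₀ x hx.1]
    congr 1
    rw [hcongr u₀ (Set.IccExtend haa u₀) (fun s hs => by rw [Set.IccExtend_of_mem haa _ hs]) x hx]
  · rintro u' ⟨hu'c, hu'eq⟩ x hx
    let v' : C(Set.Icc (0:ℝ) a, ℝ) := ⟨(Set.Icc (0:ℝ) a).restrict u', hu'c.restrict⟩
    have hfix : Function.IsFixedPt T v' := by
      ext t
      have h3 : (T v') t = Psi v' t := rfl
      rw [h3, hPsiPhi v' t t.2.1]
      have hveq : ∀ s, ∀ hs : s ∈ Set.Icc (0:ℝ) a, u' s = v' ⟨s, hs⟩ := fun s hs => rfl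
      rw [hcongr v' u' hveq t t.2]
      exact (hu'eq t t.2).symm
    have huniq : v' = u₀ := hCW.fixedPoint_unique hfix
    have : u' x = v' ⟨x, hx⟩ := rfl
    rw [this, huniq, ← Set.IccExtend_of_mem haa (⇑u₀) hx]
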